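/- Let X be a separable metrizable topological space that is countable dense homogeneous, and let I be the set of isolated points of X. Then there exist open subsets L and R of X such that I, L, R are pairwise disjoint, X = I ∪ L ∪ R, the subspace L is locally compact and has no isolated points, and every compact subset of the subspace R has empty interior in R. -/

import Mathlib

/-- A topological space is countable dense homogeneous (CDH) if for any two countable
dense subsets `D`, `D'` there is a self-homeomorphism taking `D` onto `D'`. -/
def IsCDH (X : Type*) [TopologicalSpace X] : Prop :=
  ∀ D D' : Set X, D.Countable → Dense D → D'.Countable → Dense D' →
    ∃ h : X ≃ₜ X, h '' D = D'

/-- In a separable metrizable CDH space, an open set invariant under all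
self-homeomorphisms is closed. -/
lemma IsCDH.invariant_open_isClosed {X : Type*} [TopologicalSpace X]
    [TopologicalSpace.MetrizableSpace X] [TopologicalSpace.SeparableSpace X]
    (hX : IsCDH X) {S : Set X} (_hSo : IsOpen S)
    (hinv : ∀ h : X ≃ₜ X, h '' S = S) : IsClosed S := by
  letI : MetricSpace X := TopologicalSpace.metrizableSpaceMetric X
  haveI : SecondCountableTopology X := UniformSpace.secondCountable_of_separable X
  rw [← closure_subset_iff_isClosed]
  by_contra hc
  obtain ⟨x, hxcl, hxS⟩ : ∃ x, x ∈ closure S ∧ x ∉ S := by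
    rw [Set.not_subset] at hc; exact hc
  -- a countable dense subset of X
  obtain ⟨D₀, hD₀c, hD₀d⟩ := TopologicalSpace.exists_countable_dense X
  -- a countable set E ⊆ S with S ⊆ closure E
  obtain ⟨E', hE'c, hE'd⟩ := TopologicalSpace.exists_countable_dense (↥S)
  set E : Set X := Subtype.val '' E' with hE
  have hES : E ⊆ S := by rintro _ ⟨y, -, rfl⟩; exact y.2
  have hSclE : S ⊆ closure E := by
    intro y hy
    have := hE'd.closure_eq ▸ Set.mem_univ (⟨y, hy⟩ : ↥S)
    have : (⟨y, hy⟩ : ↥S) ∈ closure E' := by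
      rw [hE'd.closure_eq]; trivial
    exact closure_subtype.mp this
  set D' : Set X := (D₀ \ closure S) ∪ E with hD'
  have hD'c : D'.Countable := (hD₀c.mono Set.diff_subset).union (hE'c.image _)
  have hD'avoid : ∀ y ∈ D', y ∈ closure S → y ∈ S := by
    rintro y (⟨-, hy⟩ | hy) hcl
    · exact absurd hcl hy
    · exact hES hy
  have hD'd : Dense D' := by
    rw [dense_iff_inter_open]
    intro U hU hUne
    by_cases hUS : (U ∩ S).Nonempty
    · obtain ⟨y, hyU, hyS⟩ := hUS
      have : y ∈ closure E := hSclE hyS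
      obtain ⟨z, hzU, hzE⟩ := mem_closure_iff.mp this U hU hyU
      exact ⟨z, hzU, Or.inr hzE⟩
    · obtain ⟨y, hyD₀, hyU⟩ := hD₀d.exists_mem_open hU hUne
      refine ⟨y, hyU, Or.inl ⟨hyD₀, fun hycl => ?_⟩⟩
      obtain ⟨z, hzU, hzS⟩ := mem_closure_iff.mp hycl U hU hyU
      exact hUS ⟨z, hzU, hzS⟩
  set D : Set X := insert x D' with hD
  have hDc : D.Countable := hD'c.insert x
  have hDd : Dense D := hD'd.mono (Set.subset_insert x D')
  obtain ⟨h, hh⟩ := hX D D' hDc hDd hD'c hD'd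
  have hxD : h x ∈ D' := hh ▸ Set.mem_image_of_mem h (Set.mem_insert x D')
  have hhx_cl : h x ∈ closure S := by
    have : h x ∈ h '' closure S := Set.mem_image_of_mem h hxcl
    rwa [h.image_closure, hinv h] at this
  have hhx_S : h x ∉ S := by
    intro hmem
    rw [← hinv h] at hmem
    obtain ⟨y, hyS, hy⟩ := hmem
    exact hxS (h.injective hy ▸ hyS)
  exact hhx_S (hD'avoid _ hxD hhx_cl)

/-- Decomposition of a separable metrizable CDH space: `X = I ⊕ L ⊕ R` where `I` is the
set of isolated points, `L` is locally compact without isolated points, and every compact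
subset of `R` has empty interior in `R`. -/
theorem CDH_decomposition
    (X : Type*) [TopologicalSpace X] [TopologicalSpace.MetrizableSpace X]
    [TopologicalSpace.SeparableSpace X] (hX : IsCDH X) :
    ∃ L R : Set X, IsOpen L ∧ IsOpen R ∧
      Disjoint {x : X | IsOpen ({x} : Set X)} L ∧
      Disjoint {x : X | IsOpen ({x} : Set X)} R ∧
      Disjoint L R ∧
      {x : X | IsOpen ({x} : Set X)} ∪ L ∪ R = Set.univ ∧
      LocallyCompactSpace ↥L ∧
      (∀ x : ↥L, ¬ IsOpen ({x} : Set ↥L)) ∧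
      (∀ K : Set ↥R, IsCompact K → interior K = ∅) := by
  letI : MetricSpace X := TopologicalSpace.metrizableSpaceMetric X
  set I : Set X := {x : X | IsOpen ({x} : Set X)} with hIdef
  set G : Set X := {x : X | ∃ K : Set X, IsCompact K ∧ K ∈ nhds x} with hGdef
  have hIo : IsOpen I := by
    rw [isOpen_iff_mem_nhds]
    intro x hx
    exact Filter.mem_of_superset (hx.mem_nhds rfl) (by rintro y rfl; exact hx)
  have hGo : IsOpen G := by
    rw [isOpen_iff_mem_nhds]
    rintro x ⟨K, hKc, hKn⟩
    refine Filter.mem_of_superset ((isOpen_interior).mem_nhds (mem_interior_iff_mem_nhds.mpr hKn))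
      (fun y hy => ⟨K, hKc, mem_interior_iff_mem_nhds.mp hy⟩)
  have hIinv : ∀ h : X ≃ₜ X, h '' I = I := by
    intro h
    ext y
    simp only [Set.mem_image, hIdef, Set.mem_setOf_eq]
    constructor
    · rintro ⟨z, hz, rfl⟩
      have : h '' {z} = {h z} := Set.image_singleton
      rw [← this]; exact h.isOpen_image.mpr hz
    · intro hy
      refine ⟨h.symm y, ?_, h.apply_symm_apply y⟩
      have : h.symm '' {y} = {h.symm y} := Set.image_singleton
      rw [← this]; exact h.symm.isOpen_image.mpr hy
  have hGinv : ∀ h : X ≃ₜ X, h '' G = G := by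
    have key : ∀ (h : X ≃ₜ X) (x : X), x ∈ G → h x ∈ G := by
      rintro h x ⟨K, hKc, hKn⟩
      exact ⟨h '' K, hKc.image h.continuous, by rw [← h.map_nhds_eq x]; exact Filter.image_mem_map hKn⟩
    intro h
    apply Set.Subset.antisymm
    · rintro _ ⟨z, hz, rfl⟩; exact key h z hz
    · intro y hy
      exact ⟨h.symm y, key h.symm y hy, h.apply_symm_apply y⟩
  have hIcl : IsClosed I := hX.invariant_open_isClosed hIo hIinv
  have hGcl : IsClosed G := hX.invariant_open_isClosed hGo hGinv
  refine ⟨G \ I, (I ∪ G)ᶜ, hGo.sdiff hIcl, (hIcl.union hGcl).isOpen_compl, ?_, ?_, ?_, ?_, ?_, ?_, ?_⟩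
  · exact Set.disjoint_left.mpr fun x hx ⟨_, hx'⟩ => hx' hx
  · exact Set.disjoint_left.mpr fun x hx hx' => hx' (Or.inl hx)
  · exact Set.disjoint_left.mpr fun x hx hx' => hx' (Or.inr hx.1)
  · ext x
    simp only [Set.mem_union, Set.mem_diff, Set.mem_compl_iff, Set.mem_univ, iff_true]
    by_cases hxI : x ∈ I
    · exact Or.inl (Or.inl hxI)
    · by_cases hxG : x ∈ G
      · exact Or.inl (Or.inr ⟨hxG, hxI⟩)
      · exact Or.inr fun h => h.elim hxI hxG
  · -- local compactness of L = G \ I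
    have hLo : IsOpen (G \ I) := hGo.sdiff hIcl
    haveI : WeaklyLocallyCompactSpace ↥(G \ I) := by
      constructor
      rintro ⟨x, hxG, hxI⟩
      have hxG' := hxG
      obtain ⟨K, hKc, hKn⟩ := hxG'
      have hmem : interior K ∩ (G \ I) ∈ nhds x :=
        Filter.inter_mem (isOpen_interior.mem_nhds (mem_interior_iff_mem_nhds.mpr hKn))
          (hLo.mem_nhds ⟨hxG, hxI⟩)
      obtain ⟨C, hCn, hCcl, hCsub⟩ := exists_mem_nhds_isClosed_subset hmem
      have hCK : IsCompact C :=
        hKc.of_isClosed_subset hCcl (fun y hy => interior_subset (hCsub hy).1)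
      refine ⟨Subtype.val ⁻¹' C, ?_, continuous_subtype_val.continuousAt.preimage_mem_nhds hCn⟩
      rw [Topology.IsEmbedding.subtypeVal.isCompact_iff, Subtype.image_preimage_coe]
      rwa [Set.inter_eq_right.mpr (fun y hy => (hCsub hy).2)]
    infer_instance
  · -- no isolated points in L
    rintro ⟨x, hx⟩ hop
    have hLo : IsOpen (G \ I) := hGo.sdiff hIcl
    have : IsOpen (Subtype.val '' ({⟨x, hx⟩} : Set ↥(G \ I))) :=
      hLo.isOpenMap_subtype_val _ hop
    rw [Set.image_singleton] at this
    exact hx.2 this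
  · -- compact subsets of R have empty interior
    intro K hK
    rw [Set.eq_empty_iff_forall_notMem]
    rintro x hx
    have hRo : IsOpen ((I ∪ G)ᶜ) := (hIcl.union hGcl).isOpen_compl
    have hint : IsOpen (Subtype.val '' interior K) := hRo.isOpenMap_subtype_val _ isOpen_interior
    have : (x : X) ∈ G := by
      refine ⟨Subtype.val '' K, hK.image continuous_subtype_val, ?_⟩
      exact Filter.mem_of_superset (hint.mem_nhds ⟨x, hx, rfl⟩)
        (Set.image_mono interior_subset)
    exact x.2 (Or.inr this)
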